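/- (Theorem 2) Let K ≥ 1, h_1,…,h_K > 0, σ² > 0, 0 < ε < K, and let M > 0 be the unique positive real with ∑_{k=1}^K 1/(1 + M h_k²) = ε. Then σ² M is the least element of the set { ∑_{k=1}^K b_k² : g ∈ ℝ, b ∈ ℝ^K, ∑_{k=1}^K (g h_k b_k − 1)² + σ² g² ≤ ε }; i.e., every (g, b) meeting the MSE constraint has sum power at least σ² M, and sum power σ² M is attained (at g* = (1/σ)·sqrt(ε − ∑_k (1/(1+M h_k²))²) and b*_k = σ M h_k/((1+M h_k²)·sqrt(ε − ∑_j (1/(1+M h_j²))²))). -/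

import Mathlib

/-- **Theorem 2.** With `M > 0` the unique solution of
`∑ k 1/(1 + M h k²) = ε`, the value `σ² M` is the least element of the set of achievable
sum powers `∑ k (b k)²` under the MSE constraint
`∑ k (g h k b k − 1)² + σ² g² ≤ ε`, attained at
`g* = (1/σ)·sqrt(ε − ∑ k (1/(1 + M h k²))²)` and
`b* k = σ M h k/((1 + M h k²)·sqrt(ε − ∑ j (1/(1 + M h j²))²))`. -/
private lemma aircomp_step1 (g hk ℓ b : ℝ) (hg : g ≠ 0) (hhk : 0 < hk) (hℓ : 0 < ℓ) :
    ℓ / (1 + ℓ * (g ^ 2 * hk ^ 2)) ≤ b ^ 2 + ℓ * (g * hk * b - 1) ^ 2 := by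
  have ha : 0 < g ^ 2 * hk ^ 2 := by positivity
  rw [div_le_iff₀ (by positivity)]
  nlinarith [sq_nonneg (g * hk * b + ℓ * g ^ 2 * hk ^ 2 * (g * hk * b - 1)), ha, hℓ.le]

private lemma aircomp_step2 (s t ℓ : ℝ) (hs : 0 < s) (ht : 0 < t) (hℓ : 0 < ℓ) :
    ℓ * (1 / (1 + s)) - ℓ * t * (1 / (1 + s)) ^ 2 + ℓ * s * (1 / (1 + s)) ^ 2 ≤ ℓ / (1 + t) := by
  have h1 : (0:ℝ) < 1 + s := by linarith
  have h2 : (0:ℝ) < 1 + t := by linarith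
  have key : ℓ * (1 / (1 + s)) - ℓ * t * (1 / (1 + s)) ^ 2 + ℓ * s * (1 / (1 + s)) ^ 2
      = ℓ * (1 + 2 * s - t) / (1 + s) ^ 2 := by field_simp; ring
  rw [key, div_le_div_iff₀ (by positivity) h2]
  nlinarith [mul_nonneg hℓ.le (sq_nonneg (t - s))]

private lemma aircomp_aux (g hk M ℓ b : ℝ) (hg : g ≠ 0) (hhk : 0 < hk) (hM : 0 < M)
    (hℓ : 0 < ℓ) :
    ℓ * (1 / (1 + M * hk ^ 2)) - ℓ ^ 2 * g ^ 2 * (hk ^ 2 * (1 / (1 + M * hk ^ 2)) ^ 2)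
      + ℓ * M * (hk ^ 2 * (1 / (1 + M * hk ^ 2)) ^ 2)
    ≤ b ^ 2 + ℓ * (g * hk * b - 1) ^ 2 := by
  have hg2 : 0 < g ^ 2 := by positivity
  have hs : 0 < M * hk ^ 2 := by positivity
  have ht : 0 < ℓ * (g ^ 2 * hk ^ 2) := by positivity
  have h2 := aircomp_step2 (M * hk ^ 2) (ℓ * (g ^ 2 * hk ^ 2)) ℓ hs ht hℓ
  have h1 := aircomp_step1 g hk ℓ b hg hhk hℓ
  have e : ℓ * (1 / (1 + M * hk ^ 2)) - ℓ ^ 2 * g ^ 2 * (hk ^ 2 * (1 / (1 + M * hk ^ 2)) ^ 2)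
      + ℓ * M * (hk ^ 2 * (1 / (1 + M * hk ^ 2)) ^ 2)
      = ℓ * (1 / (1 + M * hk ^ 2)) - ℓ * (ℓ * (g ^ 2 * hk ^ 2)) * (1 / (1 + M * hk ^ 2)) ^ 2
        + ℓ * (M * hk ^ 2) * (1 / (1 + M * hk ^ 2)) ^ 2 := by ring
  rw [e]
  exact h2.trans h1

theorem aircomp_theorem2 (K : ℕ) (hK : 1 ≤ K) (h : Fin K → ℝ) (hh : ∀ k, 0 < h k)
    (σ : ℝ) (hσ : 0 < σ) (ε : ℝ) (hε0 : 0 < ε) (hεK : ε < K)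
    (M : ℝ) (hM : 0 < M) (hMε : (∑ k, 1 / (1 + M * h k ^ 2)) = ε) :
    IsLeast {pw : ℝ | ∃ (g : ℝ) (b : Fin K → ℝ),
        (∑ k, (g * h k * b k - 1) ^ 2) + σ ^ 2 * g ^ 2 ≤ ε ∧ pw = ∑ k, b k ^ 2}
      (σ ^ 2 * M)
    ∧ (∑ k, (((1 / σ) * Real.sqrt (ε - ∑ j, (1 / (1 + M * h j ^ 2)) ^ 2)) * h k *
          (σ * M * h k / ((1 + M * h k ^ 2) *
            Real.sqrt (ε - ∑ j, (1 / (1 + M * h j ^ 2)) ^ 2))) - 1) ^ 2)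
        + σ ^ 2 * ((1 / σ) * Real.sqrt (ε - ∑ j, (1 / (1 + M * h j ^ 2)) ^ 2)) ^ 2 ≤ ε
    ∧ (∑ k, (σ * M * h k / ((1 + M * h k ^ 2) *
          Real.sqrt (ε - ∑ j, (1 / (1 + M * h j ^ 2)) ^ 2))) ^ 2) = σ ^ 2 * M := by
  have hden : ∀ k, 0 < 1 + M * h k ^ 2 := fun k => by have := hh k; positivity
  have hcpos : ∀ k, 0 < 1 / (1 + M * h k ^ 2) := fun k => by positivity
  set S := ∑ j, (1 / (1 + M * h j ^ 2)) ^ 2 with hS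
  have hne : (Finset.univ : Finset (Fin K)).Nonempty := ⟨⟨0, hK⟩, Finset.mem_univ _⟩
  have hSlt : S < ε := by
    rw [hS, ← hMε]
    refine Finset.sum_lt_sum_of_nonempty hne ?_
    intro k _
    have hc1 : 1 / (1 + M * h k ^ 2) < 1 := by
      rw [div_lt_one (hden k)]
      nlinarith [mul_pos hM (pow_pos (hh k) 2)]
    nlinarith [hcpos k]
  have hεS : 0 < ε - S := by linarith
  set T := ∑ k, h k ^ 2 * (1 / (1 + M * h k ^ 2)) ^ 2 with hT
  have hMT : M * T = ε - S := by
    have e1 : M * T = ∑ k, (1 / (1 + M * h k ^ 2) - (1 / (1 + M * h k ^ 2)) ^ 2) := by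
      rw [hT, Finset.mul_sum]
      refine Finset.sum_congr rfl fun k _ => ?_
      have hd := (hden k).ne'
      field_simp
      ring
    rw [e1, Finset.sum_sub_distrib, hMε, ← hS]
  set D := Real.sqrt (ε - S) with hD
  have hD2 : D ^ 2 = ε - S := Real.sq_sqrt hεS.le
  have hDpos : 0 < D := Real.sqrt_pos.mpr hεS
  -- attainment : MSE constraint
  have attMSE : (∑ k, ((1 / σ * D) * h k * (σ * M * h k / ((1 + M * h k ^ 2) * D)) - 1) ^ 2)
      + σ ^ 2 * (1 / σ * D) ^ 2 ≤ ε := by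
    have hterm : ∀ k : Fin K,
        (1 / σ * D) * h k * (σ * M * h k / ((1 + M * h k ^ 2) * D)) - 1
          = -(1 / (1 + M * h k ^ 2)) := by
      intro k
      have hd := (hden k).ne'
      field_simp
      ring
    have e1 : (∑ k, ((1 / σ * D) * h k * (σ * M * h k / ((1 + M * h k ^ 2) * D)) - 1) ^ 2)
        = S := by
      rw [hS]
      refine Finset.sum_congr rfl fun k _ => ?_
      rw [hterm k, neg_sq]
    have e2 : σ ^ 2 * (1 / σ * D) ^ 2 = ε - S := by
      rw [← hD2]; field_simp
    rw [e1, e2]; linarith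
  -- attainment : power value
  have attPW : (∑ k, (σ * M * h k / ((1 + M * h k ^ 2) * D)) ^ 2) = σ ^ 2 * M := by
    have hterm : ∀ k : Fin K, (σ * M * h k / ((1 + M * h k ^ 2) * D)) ^ 2
        = σ ^ 2 * M ^ 2 / (ε - S) * (h k ^ 2 * (1 / (1 + M * h k ^ 2)) ^ 2) := by
      intro k
      rw [← hD2]
      have hd := (hden k).ne'
      have hDne := hDpos.ne'
      field_simp
    have e1 : (∑ k, (σ * M * h k / ((1 + M * h k ^ 2) * D)) ^ 2)
        = σ ^ 2 * M ^ 2 / (ε - S) * T := by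
      rw [Finset.sum_congr rfl fun k _ => hterm k, ← Finset.mul_sum, hT]
    rw [e1]
    field_simp
    linear_combination hMT
  -- lower bound
  have lower : ∀ pw ∈ {pw : ℝ | ∃ (g : ℝ) (b : Fin K → ℝ),
      (∑ k, (g * h k * b k - 1) ^ 2) + σ ^ 2 * g ^ 2 ≤ ε ∧ pw = ∑ k, b k ^ 2},
      σ ^ 2 * M ≤ pw := by
    rintro pw ⟨g, b, hcons, hpw⟩
    have hg : g ≠ 0 := by
      rintro rfl
      have e0 : (∑ k, ((0:ℝ) * h k * b k - 1) ^ 2) = (K : ℝ) := by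
        simp
      rw [e0] at hcons
      simp at hcons
      linarith
    set ℓ := σ ^ 2 * M / (ε - S) with hℓdef
    have hℓ : 0 < ℓ := div_pos (by positivity) hεS
    have key := Finset.sum_le_sum
      (f := fun k => ℓ * (1 / (1 + M * h k ^ 2))
        - ℓ ^ 2 * g ^ 2 * (h k ^ 2 * (1 / (1 + M * h k ^ 2)) ^ 2)
        + ℓ * M * (h k ^ 2 * (1 / (1 + M * h k ^ 2)) ^ 2))
      (g := fun k => b k ^ 2 + ℓ * (g * h k * b k - 1) ^ 2)
      (s := Finset.univ)
      (fun k _ => aircomp_aux g (h k) M ℓ (b k) hg (hh k) hM hℓ)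
    have hLHS : (∑ k, (ℓ * (1 / (1 + M * h k ^ 2))
        - ℓ ^ 2 * g ^ 2 * (h k ^ 2 * (1 / (1 + M * h k ^ 2)) ^ 2)
        + ℓ * M * (h k ^ 2 * (1 / (1 + M * h k ^ 2)) ^ 2)))
        = ℓ * ε - ℓ ^ 2 * g ^ 2 * T + ℓ * M * T := by
      rw [Finset.sum_add_distrib, Finset.sum_sub_distrib, ← Finset.mul_sum, ← Finset.mul_sum,
        ← Finset.mul_sum, hMε, ← hT]
    have hRHS : (∑ k, (b k ^ 2 + ℓ * (g * h k * b k - 1) ^ 2))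
        = (∑ k, b k ^ 2) + ℓ * (∑ k, (g * h k * b k - 1) ^ 2) := by
      rw [Finset.sum_add_distrib, Finset.mul_sum]
    rw [hLHS, hRHS] at key
    have hℓMT : ℓ * M * T = σ ^ 2 * M := by
      rw [show ℓ * M * T = ℓ * (M * T) from by ring, hMT, hℓdef,
        div_mul_eq_mul_div, mul_div_assoc, div_self hεS.ne', mul_one]
    have hℓT : ℓ ^ 2 * g ^ 2 * T = σ ^ 2 * ℓ * g ^ 2 := by
      have h1 : ℓ * T = σ ^ 2 := by
        rw [hℓdef, div_mul_eq_mul_div, div_eq_iff hεS.ne']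
        linear_combination σ ^ 2 * hMT
      calc ℓ ^ 2 * g ^ 2 * T = (ℓ * T) * (ℓ * g ^ 2) := by ring
        _ = σ ^ 2 * ℓ * g ^ 2 := by rw [h1]; ring
    have hsum : ℓ * (∑ k, (g * h k * b k - 1) ^ 2) ≤ ℓ * (ε - σ ^ 2 * g ^ 2) := by
      refine mul_le_mul_of_nonneg_left ?_ hℓ.le
      linarith
    rw [hpw]
    nlinarith [key, hsum, hℓMT, hℓT]
  exact ⟨⟨⟨1 / σ * D, fun k => σ * M * h k / ((1 + M * h k ^ 2) * D), attMSE, attPW.symm⟩,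
    lower⟩, attMSE, attPW⟩
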